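/- Let $\rho_t(x,dy)=\sqrt{c_t/\pi}\,\exp[-c_t(y-e^{-\alpha t}x)^2]\,dy$ with $c_t=\alpha/(1-e^{-2\alpha t})$, $\alpha>0$, $t>0$, be the Ornstein–Uhlenbeck transition kernel, and let $k_z^{\sigma}(x)=\exp(-(x-z)^2/\sigma^2)$ be a Gaussian RBF feature. Setting $\tau=\sqrt{c_t\sigma^2/(1+c_t\sigma^2)}$ and $\nu=e^{\alpha t}\sigma/\tau$, one has for all $x\in\mathbb{R}$: $\int_{-\infty}^{\infty}k_z^{\sigma}(y)\,\rho_t(x,dy)=\tau\cdot k_{e^{\alpha t}z}^{\nu}(x)$. -/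

import Mathlib

/-- The Ornstein–Uhlenbeck transition kernel applied to a Gaussian RBF feature:
with `c_t = α/(1-e^{-2αt})`, `τ = √(c_t σ²/(1+c_t σ²))` and `ν = e^{αt} σ/τ`,
`∫ exp(-(y-z)²/σ²) √(c_t/π) exp(-c_t (y - e^{-αt}x)²) dy = τ · exp(-(x - e^{αt}z)²/ν²)`. -/
theorem stmt9
    (α t σ : ℝ) (hα : 0 < α) (ht : 0 < t) (hσ : 0 < σ)
    (c τ ν : ℝ)
    (hc : c = α / (1 - Real.exp (-2 * α * t)))
    (hτ : τ = Real.sqrt (c * σ ^ 2 / (1 + c * σ ^ 2)))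
    (hν : ν = Real.exp (α * t) * σ / τ)
    (z x : ℝ) :
    ∫ y : ℝ, Real.exp (-(y - z) ^ 2 / σ ^ 2)
        * (Real.sqrt (c / Real.pi) * Real.exp (-c * (y - Real.exp (-α * t) * x) ^ 2))
      = τ * Real.exp (-(x - Real.exp (α * t) * z) ^ 2 / ν ^ 2) := by
  have hexp : Real.exp (-2 * α * t) < 1 := by
    rw [Real.exp_lt_one_iff]; nlinarith
  have hcpos : 0 < c := by
    rw [hc]; exact div_pos hα (by linarith)
  set E := Real.exp (α * t) with hE
  have hEpos : 0 < E := Real.exp_pos _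
  have hEm : Real.exp (-α * t) = E⁻¹ := by
    rw [hE, ← Real.exp_neg]; ring_nf
  set a : ℝ := 1 / σ ^ 2 with ha
  have hapos : 0 < a := by positivity
  set s : ℝ := a + c with hs
  have hspos : 0 < s := by positivity
  set μ : ℝ := (a * z + c * E⁻¹ * x) / s with hμ
  have hσ2 : (σ : ℝ) ^ 2 ≠ 0 := by positivity
  have hsne : s ≠ 0 := ne_of_gt hspos
  -- pointwise rewriting of the integrand
  have hpt : ∀ y : ℝ,
      Real.exp (-(y - z) ^ 2 / σ ^ 2)
        * (Real.sqrt (c / Real.pi) * Real.exp (-c * (y - Real.exp (-α * t) * x) ^ 2))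
      = (Real.sqrt (c / Real.pi) * Real.exp (-(a * c / s) * (z - E⁻¹ * x) ^ 2))
          * Real.exp (-s * (y - μ) ^ 2) := by
    intro y
    rw [hEm]
    rw [mul_comm (Real.exp _) _, mul_assoc, ← Real.exp_add, mul_assoc, ← Real.exp_add]
    congr 1
    rw [Real.exp_eq_exp]
    rw [hμ, hs, ha]
    have hE' : E ≠ 0 := ne_of_gt hEpos
    have hs' : 1 / σ ^ 2 + c ≠ 0 := by rw [← ha, ← hs]; exact hsne
    field_simp
    ring
  rw [MeasureTheory.integral_congr_ae (Filter.Eventually.of_forall hpt),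
    MeasureTheory.integral_const_mul]
  have hshift : ∫ y : ℝ, Real.exp (-s * (y - μ) ^ 2)
      = ∫ y : ℝ, Real.exp (-s * y ^ 2) :=
    MeasureTheory.integral_sub_right_eq_self (fun y => Real.exp (-s * y ^ 2)) μ
  rw [hshift, integral_gaussian s]
  -- τ = sqrt(c/s)
  have hτ' : τ = Real.sqrt (c / s) := by
    rw [hτ]
    congr 1
    rw [hs, ha]
    field_simp
  have hτpos : 0 < τ := by
    rw [hτ']; exact Real.sqrt_pos.2 (by positivity)
  have hτsq : τ ^ 2 = c / s := by
    rw [hτ', Real.sq_sqrt (by positivity)]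
  have hcoef : Real.sqrt (c / Real.pi) * Real.sqrt (Real.pi / s) = τ := by
    rw [← Real.sqrt_mul (by positivity), hτ']
    congr 1
    field_simp
  have hνsq : ν ^ 2 = E ^ 2 * σ ^ 2 * s / c := by
    rw [hν, div_pow, mul_pow, hτsq]
    field_simp
  have hexpeq : -(a * c / s) * (z - E⁻¹ * x) ^ 2
      = -(x - E * z) ^ 2 / ν ^ 2 := by
    rw [hνsq, ha]
    have hc' : c ≠ 0 := ne_of_gt hcpos
    have hE' : E ≠ 0 := ne_of_gt hEpos
    field_simp
    ring
  calc Real.sqrt (c / Real.pi) * Real.exp (-(a * c / s) * (z - E⁻¹ * x) ^ 2)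
        * Real.sqrt (Real.pi / s)
      = (Real.sqrt (c / Real.pi) * Real.sqrt (Real.pi / s))
          * Real.exp (-(a * c / s) * (z - E⁻¹ * x) ^ 2) := by ring
    _ = τ * Real.exp (-(x - E * z) ^ 2 / ν ^ 2) := by rw [hcoef, hexpeq]
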